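/- Let f : [0,1] → [0,∞] be non-decreasing and in the class 𝓕, M = Ran(f), and let C be the countable 'boundary' set from the pair (S,C) associated with M. If G_M(x) = G_M(y) for x,y ∈ [0,∞], then the half-open interval [min{x,y}, max{x,y}) is disjoint from M \ C. -/
import Mathlib


open Set ENNReal

/-- Pseudo-inverse of `f : [0,1] → [0,∞]`: `f⁻(y) = sup {x ∈ [0,1] | f x < y}` (with `sup ∅ = 0`). -/
noncomputable def pinv (f : unitInterval → ℝ≥0∞) (y : ℝ≥0∞) : unitInterval :=
  ⟨sSup {x : ℝ | ∃ hx : x ∈ unitInterval, f ⟨x, hx⟩ < y}, by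
    set A : Set ℝ := {x : ℝ | ∃ hx : x ∈ unitInterval, f ⟨x, hx⟩ < y} with hA
    have hsub : A ⊆ Set.Icc (0:ℝ) 1 := fun x hx => hx.choose
    rcases A.eq_empty_or_nonempty with h | h
    · rw [h, Real.sSup_empty]; exact ⟨le_refl 0, zero_le_one⟩
    · obtain ⟨a, ha⟩ := h
      exact ⟨le_trans (hsub ha).1 (le_csSup ⟨1, fun z hz => (hsub hz).2⟩ ha),
        csSup_le ⟨a, ha⟩ fun z hz => (hsub hz).2⟩⟩

/-- `G_M(x) = max (M ∩ {sup([0,x]∩M), inf([x,∞]∩M)})`. -/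
noncomputable def GM (M : Set ℝ≥0∞) (x : ℝ≥0∞) : ℝ≥0∞ :=
  sSup (M ∩ {sSup (M ∩ Set.Iic x), sInf (M ∩ Set.Ici x)})

/-- Right limit `f(x⁺)`, with convention `f(1⁺) = ∞`. -/
noncomputable def rlim (f : unitInterval → ℝ≥0∞) (x : unitInterval) : ℝ≥0∞ :=
  if (x : ℝ) = 1 then ⊤ else sInf {z | ∃ t : unitInterval, x < t ∧ f t = z}

/-- The defining condition of the class `𝓕`. -/
def ClassF (f : unitInterval → ℝ≥0∞) : Prop :=
  ∀ x : unitInterval,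
    (rlim f x ∈ Set.range f → f x = rlim f x) ∧
    (rlim f x ∉ Set.range f → ∀ y : unitInterval, y ≠ x → f y ≠ f x)

/-- The pair `(S, C)` (with `S` given by interval endpoints `b k, d k`) is associated with `M`. -/
def AssociatedPair (M : Set ℝ≥0∞) (K : Type) (b d : K → ℝ≥0∞) (C : Set ℝ≥0∞) : Prop :=
  Countable K ∧ C.Countable ∧ C.Nonempty ∧
  (∀ k, b k < d k) ∧
  (∀ k l : K, k ≠ l →
      Set.Icc (b k) (d k) ∩ Set.Icc (b l) (d l) = ∅ ∨
      Set.Icc (b k) (d k) ∩ Set.Icc (b l) (d l) = {d k} ∨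
      Set.Icc (b k) (d k) ∩ Set.Icc (b l) (d l) = {d l}) ∧
  (∀ k, Set.Icc (b k) (d k) ∩ C = {b k} ∨ Set.Icc (b k) (d k) ∩ C = {d k} ∨
        Set.Icc (b k) (d k) ∩ C = {b k, d k}) ∧
  M = C ∪ (Set.univ \ ⋃ k, Set.Icc (b k) (d k))

lemma aux_key (M : Set ℝ≥0∞) (K : Type) (b d : K → ℝ≥0∞) (C : Set ℝ≥0∞)
    (hbd : ∀ k, b k < d k)
    (hIC : ∀ k, Set.Icc (b k) (d k) ∩ C = {b k} ∨ Set.Icc (b k) (d k) ∩ C = {d k} ∨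
        Set.Icc (b k) (d k) ∩ C = {b k, d k})
    (hM : M = C ∪ (Set.univ \ ⋃ k, Set.Icc (b k) (d k)))
    (x y : ℝ≥0∞) (hxy : x ≤ y) (h : GM M x = GM M y) :
    Set.Ico x y ∩ (M \ C) = ∅ := by
  have hCM : C ⊆ M := hM ▸ Set.subset_union_left
  rw [Set.eq_empty_iff_forall_notMem]
  rintro m ⟨⟨hxm, hmy⟩, hmM, hmC⟩
  -- m is in no gap interval
  have hmNot : ∀ k, m ∉ Set.Icc (b k) (d k) := by
    intro k hk
    have := hM ▸ hmM
    rcases this with h1 | h1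
    · exact hmC h1
    · exact h1.2 (Set.mem_iUnion.mpr ⟨k, hk⟩)
  -- membership in M of a point in an interval forces membership in C
  have hMemC : ∀ (k : K) (v : ℝ≥0∞), v ∈ M → v ∈ Set.Icc (b k) (d k) → v ∈ C := by
    intro k v hvM hvk
    rcases hM ▸ hvM with h1 | h1
    · exact h1
    · exact absurd (Set.mem_iUnion.mpr ⟨k, hvk⟩) h1.2
  -- GM M x ≤ m
  have GMx_le : GM M x ≤ m := by
    apply sSup_le
    rintro z ⟨hzM, hz⟩
    rcases hz with hz | hz
    · subst hz
      exact le_trans (sSup_le fun w hw => hw.2) hxm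
    · rw [Set.mem_singleton_iff] at hz
      subst hz
      exact sInf_le ⟨hmM, hxm⟩
  have GMy_le : GM M y ≤ m := h ▸ GMx_le
  -- the finishing move
  have final : ∀ k : K, y ≤ d k → d k ∈ M → (∀ v, v ∈ M → y ≤ v → d k ≤ v) → False := by
    intro k hyd hdM hlow
    have htk : sInf (M ∩ Set.Ici y) = d k :=
      le_antisymm (sInf_le ⟨hdM, hyd⟩) (le_sInf fun v hv => hlow v hv.1 hv.2)
    have h1 : d k ≤ GM M y := le_sSup ⟨hdM, Or.inr htk.symm⟩
    exact absurd ((hmy.trans_le hyd).trans_le (h1.trans GMy_le)) (lt_irrefl _)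
  set s := sSup (M ∩ Set.Iic y) with hs
  have hs_le_y : s ≤ y := sSup_le fun w hw => hw.2
  have hm_le_s : m ≤ s := le_sSup ⟨hmM, hmy.le⟩
  by_cases hsM : s ∈ M
  · -- s ∈ M : then s ≤ GM M y ≤ m, so s = m
    have hs1 : s ≤ GM M y := le_sSup (show s ∈ M ∩ {sSup (M ∩ Set.Iic y), sInf (M ∩ Set.Ici y)} from ⟨hsM, Or.inl rfl⟩)
    have hsle : s ≤ m := le_trans hs1 GMy_le
    have hsm : s = m := le_antisymm hsle hm_le_s
    have hyM : y ∉ M := by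
      intro hy
      have h2 : y ≤ s := le_sSup ⟨hy, le_refl y⟩
      exact absurd hmy (not_lt.mpr (h2.trans hsm.le))
    have hyU : y ∈ ⋃ k, Set.Icc (b k) (d k) := by
      by_contra hyU
      exact hyM (hM ▸ Or.inr ⟨Set.mem_univ y, hyU⟩)
    obtain ⟨k, hyk⟩ := Set.mem_iUnion.mp hyU
    have hbk_m : m < b k := by
      by_contra hbm
      exact hmNot k ⟨le_of_not_gt hbm, hmy.le.trans hyk.2⟩
    have hbkC : b k ∉ C := by
      intro hbC
      have : b k ≤ s := le_sSup ⟨hCM hbC, hyk.1⟩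
      exact absurd hbk_m (not_lt.mpr (this.trans hsm.le))
    -- b k ∉ C forces Icc ∩ C = {d k}
    have hdC : d k ∈ C := by
      rcases hIC k with hic | hic | hic
      · exact absurd (show b k ∈ Set.Icc (b k) (d k) ∩ C by
          rw [hic]; exact Set.mem_singleton _).2 hbkC
      · exact (show d k ∈ Set.Icc (b k) (d k) ∩ C by
          rw [hic]; exact Set.mem_singleton _).2
      · exact absurd (show b k ∈ Set.Icc (b k) (d k) ∩ C by
          rw [hic]; exact Set.mem_insert _ _).2 hbkC
    have hicd : Set.Icc (b k) (d k) ∩ C = {d k} := by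
      rcases hIC k with hic | hic | hic
      · exact absurd (show b k ∈ Set.Icc (b k) (d k) ∩ C by
          rw [hic]; exact Set.mem_singleton _).2 hbkC
      · exact hic
      · exact absurd (show b k ∈ Set.Icc (b k) (d k) ∩ C by
          rw [hic]; exact Set.mem_insert _ _).2 hbkC
    refine final k hyk.2 (hCM hdC) ?_
    intro v hvM hyv
    by_contra hvd
    have hvd' : v < d k := lt_of_not_ge hvd
    have hvIcc : v ∈ Set.Icc (b k) (d k) := ⟨hyk.1.trans hyv, hvd'.le⟩
    have hvC : v ∈ C := hMemC k v hvM hvIcc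
    have : v ∈ ({d k} : Set ℝ≥0∞) := hicd ▸ (⟨hvIcc, hvC⟩ : v ∈ Set.Icc (b k) (d k) ∩ C)
    exact hvd (le_of_eq (Set.mem_singleton_iff.mp this).symm)
  · -- case s ∉ M
    have hsC : s ∉ C := fun hc => hsM (hCM hc)
    have hsU : s ∈ ⋃ k, Set.Icc (b k) (d k) := by
      by_contra hsU
      exact hsM (hM ▸ Or.inr ⟨Set.mem_univ s, hsU⟩)
    obtain ⟨k, hsk⟩ := Set.mem_iUnion.mp hsU
    have hbk_eq : b k = s := by
      refine le_antisymm hsk.1 ?_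
      by_contra hlt
      have hbs : b k < s := lt_of_not_ge hlt
      obtain ⟨u, hu, hbu⟩ := lt_sSup_iff.mp hbs
      have hus : u ≤ s := le_sSup hu
      have huIcc : u ∈ Set.Icc (b k) (d k) := ⟨hbu.le, hus.trans hsk.2⟩
      have huC := hMemC k u hu.1 huIcc
      have hud : u = d k := by
        rcases hIC k with hic | hic | hic
        · have : u ∈ ({b k} : Set ℝ≥0∞) := hic ▸ (⟨huIcc, huC⟩ : u ∈ Set.Icc (b k) (d k) ∩ C)
          exact absurd (Set.mem_singleton_iff.mp this) (ne_of_gt hbu)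
        · have : u ∈ ({d k} : Set ℝ≥0∞) := hic ▸ (⟨huIcc, huC⟩ : u ∈ Set.Icc (b k) (d k) ∩ C)
          exact Set.mem_singleton_iff.mp this
        · have : u ∈ ({b k, d k} : Set ℝ≥0∞) := hic ▸ (⟨huIcc, huC⟩ : u ∈ Set.Icc (b k) (d k) ∩ C)
          rcases this with h1 | h1
          · exact absurd h1 (ne_of_gt hbu)
          · exact Set.mem_singleton_iff.mp h1
      have hseq : s = d k := le_antisymm hsk.2 (hud ▸ hus)
      exact hsM (hseq ▸ hCM (hud ▸ huC))
    have hbkC : b k ∉ C := hbk_eq ▸ hsC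
    have hdC : d k ∈ C := by
      rcases hIC k with hic | hic | hic
      · exact absurd (show b k ∈ Set.Icc (b k) (d k) ∩ C by
          rw [hic]; exact Set.mem_singleton _).2 hbkC
      · exact (show d k ∈ Set.Icc (b k) (d k) ∩ C by
          rw [hic]; exact Set.mem_singleton _).2
      · exact absurd (show b k ∈ Set.Icc (b k) (d k) ∩ C by
          rw [hic]; exact Set.mem_insert _ _).2 hbkC
    have hicd : Set.Icc (b k) (d k) ∩ C = {d k} := by
      rcases hIC k with hic | hic | hic
      · exact absurd (show b k ∈ Set.Icc (b k) (d k) ∩ C by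
          rw [hic]; exact Set.mem_singleton _).2 hbkC
      · exact hic
      · exact absurd (show b k ∈ Set.Icc (b k) (d k) ∩ C by
          rw [hic]; exact Set.mem_insert _ _).2 hbkC
    have hyd : y ≤ d k := by
      by_contra hyd
      have hdy : d k ≤ y := (lt_of_not_ge hyd).le
      have : d k ≤ s := le_sSup ⟨hCM hdC, hdy⟩
      exact absurd (hbd k) (not_lt.mpr (this.trans hbk_eq.symm.le))
    refine final k hyd (hCM hdC) ?_
    intro v hvM hyv
    by_contra hvd
    have hvd' : v < d k := lt_of_not_ge hvd
    have hvIcc : v ∈ Set.Icc (b k) (d k) :=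
      ⟨hbk_eq ▸ (hs_le_y.trans hyv), hvd'.le⟩
    have hvC : v ∈ C := hMemC k v hvM hvIcc
    have : v ∈ ({d k} : Set ℝ≥0∞) := hicd ▸ (⟨hvIcc, hvC⟩ : v ∈ Set.Icc (b k) (d k) ∩ C)
    exact hvd (le_of_eq (Set.mem_singleton_iff.mp this).symm)


theorem stmt14 (f : unitInterval → ℝ≥0∞) (hf : Monotone f) (hF : ClassF f)
    (K : Type) (b d : K → ℝ≥0∞) (C : Set ℝ≥0∞)
    (hSC : AssociatedPair (Set.range f) K b d C) :
    ∀ x y : ℝ≥0∞, GM (Set.range f) x = GM (Set.range f) y →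
      Set.Ico (min x y) (max x y) ∩ (Set.range f \ C) = ∅ := by
  obtain ⟨-, -, -, hbd, -, hIC, hM⟩ := hSC
  intro x y h
  rcases le_total x y with hxy | hxy
  · rw [min_eq_left hxy, max_eq_right hxy]
    exact aux_key (Set.range f) K b d C hbd hIC hM x y hxy h
  · rw [min_eq_right hxy, max_eq_left hxy]
    exact aux_key (Set.range f) K b d C hbd hIC hM y x hxy h.symm
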